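/- For a rooted binary phylogenetic network N on X with inheritance probabilities, the Net Fair Proportion Index is efficient: Σ_{a∈X} NFP(a) equals the total sum of edge lengths of N. -/

import Mathlib

open Finset
open scoped Classical

/-- `IsPath E u v p` : `p` is a list of consecutive edges of `E` leading from `u` to `v`. -/
def IsPath {V : Type*} (E : Finset (V × V)) : V → V → List (V × V) → Prop
  | u, v, [] => u = v
  | u, v, e :: p => e ∈ E ∧ e.1 = u ∧ IsPath E e.2 v p

/-- The vertex `u` lies on the path `p` starting at the vertex `a`. -/
def MemPath {V : Type*} (u a : V) (p : List (V × V)) : Prop :=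
  u = a ∨ ∃ e ∈ p, e.2 = u

/-- indegree of a vertex. -/
def inDeg {V : Type*} [DecidableEq V] (E : Finset (V × V)) (v : V) : ℕ :=
  (E.filter fun e => e.2 = v).card

/-- outdegree of a vertex. -/
def outDeg {V : Type*} [DecidableEq V] (E : Finset (V × V)) (v : V) : ℕ :=
  (E.filter fun e => e.1 = v).card

/-- All lists of length `n` with entries in `s`. -/
def listsOf {V : Type*} [DecidableEq V] (s : Finset (V × V)) : ℕ → Finset (List (V × V))
  | 0 => {[]}
  | n + 1 => s.biUnion fun e => (listsOf s n).image (e :: ·)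

/-- The (finite) set of all directed paths from `u` to `v` in an acyclic digraph. -/
noncomputable def allPaths {V : Type*} [Fintype V] [DecidableEq V]
    (E : Finset (V × V)) (u v : V) : Finset (List (V × V)) :=
  ((Finset.range (Fintype.card V + 1)).biUnion (listsOf E)).filter (IsPath E u v)

/-- A rooted binary phylogenetic network on the taxon set `X`, with vertex set `V`,
edge lengths and inheritance probabilities. -/
structure PhyloNetwork (V X : Type*) [Fintype V] [DecidableEq V] [Fintype X] where
  E : Finset (V × V)
  root : V
  len : V × V → ℝ
  prob : V × V → ℝ
  leafOf : X → V
  leafOf_inj : Function.Injective leafOf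
  root_in : inDeg E root = 0
  root_out : outDeg E root = 2
  leaf_iff : ∀ v, outDeg E v = 0 ↔ ∃ x, leafOf x = v
  leaf_in : ∀ x, inDeg E (leafOf x) = 1
  internal : ∀ v, v ≠ root → outDeg E v ≠ 0 →
      (inDeg E v = 1 ∧ outDeg E v = 2) ∨ (inDeg E v = 2 ∧ outDeg E v = 1)
  reach : ∀ v, ∃ p, IsPath E root v p
  acyclic : ∀ (v : V) (p : List (V × V)), p ≠ [] → ¬ IsPath E v v p
  len_nonneg : ∀ e ∈ E, 0 ≤ len e
  len_pos_tree : ∀ e ∈ E, inDeg E e.2 ≤ 1 → 0 < len e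
  len_retic : ∀ e ∈ E, inDeg E e.2 = 2 → len e = 0
  prob_tree : ∀ e ∈ E, inDeg E e.2 ≤ 1 → prob e = 1
  prob_pos : ∀ e ∈ E, 0 < prob e
  prob_lt_one : ∀ e ∈ E, inDeg E e.2 = 2 → prob e < 1
  prob_sum : ∀ v, inDeg E v = 2 → ∑ e ∈ E.filter (fun e => e.2 = v), prob e = 1

namespace PhyloNetwork

variable {V X : Type*} [Fintype V] [DecidableEq V] [Fintype X] [DecidableEq X]
variable (N : PhyloNetwork V X)

/-- Probability of a directed path: the product of the probabilities of its edges. -/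
noncomputable def pathProb (p : List (V × V)) : ℝ := (p.map N.prob).prod

/-- Total weight (sum of branch lengths) of a set of edges. -/
noncomputable def weight (A : Finset (V × V)) : ℝ := ∑ e ∈ A, N.len e

/-- A switching keeps exactly one incoming edge of every non-root vertex, i.e. it
deletes exactly one of the two incoming reticulation edges of each reticulation node
and keeps all tree edges. -/
def IsSwitching (F : Finset (V × V)) : Prop :=
  F ⊆ N.E ∧ ∀ v, v ≠ N.root → (F.filter fun e => e.2 = v).card = 1

/-- The switching yields a phylogenetic `X`-tree: every dead end is a labeled leaf. -/
def IsValidSwitching (F : Finset (V × V)) : Prop :=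
  N.IsSwitching F ∧ ∀ v, outDeg F v = 0 → ∃ x, N.leafOf x = v

/-- The (multi)set `T(N)` of phylogenetic `X`-trees displayed by `N`, each tree being
encoded by the switching producing it. -/
noncomputable def displayed : Finset (Finset (V × V)) :=
  N.E.powerset.filter N.IsValidSwitching

/-- The set of leaves lying below the edge `e` inside the subgraph `F`. -/
noncomputable def clusterIn (F : Finset (V × V)) (e : V × V) : Finset X :=
  Finset.univ.filter fun x => ∃ p, IsPath F e.2 (N.leafOf x) p

/-- Phylogenetic diversity of `S` in the tree displayed by the switching `F`
(the sum of the lengths of the edges of the minimal subtree spanning `S` and the root;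
suppression of degree-two vertices merges edge lengths additively, so it is computed
on the unsuppressed switching). -/
noncomputable def PDdisp (F : Finset (V × V)) (S : Finset X) : ℝ :=
  ∑ e ∈ F.filter (fun e => (N.clusterIn F e ∩ S).Nonempty), N.len e

/-- Unscaled probability of the tree displayed by the switching `F`: the product of the
inheritance probabilities of the kept reticulation edges. -/
noncomputable def Punsc (F : Finset (V × V)) : ℝ :=
  ∏ e ∈ F.filter (fun e => inDeg N.E e.2 = 2), N.prob e

/-- `v` is a vertex of the edge set `A`. -/
def vertexOf (A : Finset (V × V)) (v : V) : Prop := ∃ e ∈ A, e.1 = v ∨ e.2 = v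

/-- `A` is an arborescence rooted at the root of `N` inside `N`: there is exactly one
directed path from the root to each of its vertices. -/
def IsArbor (A : Finset (V × V)) : Prop :=
  A ⊆ N.E ∧ ∀ v, vertexOf A v → (allPaths A N.root v).card = 1

/-- `A` contains all taxa of `S`. -/
def spans (A : Finset (V × V)) (S : Finset X) : Prop :=
  ∀ x ∈ S, vertexOf A (N.leafOf x)

/-- Phylogenetic net diversity: the weight of a minimum cost arborescence containing
`S` and the root. -/
noncomputable def PND (S : Finset X) : ℝ :=
  sInf {w : ℝ | ∃ A, N.IsArbor A ∧ N.spans A S ∧ w = N.weight A}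

/-- Phylogenetic subnet diversity: the total weight of the subgraph of `N` consisting of
all edges lying on some directed path from the root to a leaf of `S`. -/
noncomputable def PSD (S : Finset X) : ℝ :=
  ∑ e ∈ N.E.filter (fun e => ∃ x ∈ S, ∃ p, IsPath N.E N.root (N.leafOf x) p ∧ e ∈ p), N.len e

/-- Probability that the leaf `d` is a descendant of the node `v`: the sum of the
probabilities of all directed paths from `v` to `d`. -/
noncomputable def Pdesc (v : V) (d : X) : ℝ :=
  ∑ p ∈ allPaths N.E v (N.leafOf d), N.pathProb p

/-- The set of leaves that are descendants of the edge `e`. -/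
noncomputable def De (e : V × V) : Finset X :=
  Finset.univ.filter fun x => ∃ p, IsPath N.E e.2 (N.leafOf x) p

/-- Net Fair Proportion Index of the taxon `a`. -/
noncomputable def NFP (a : X) : ℝ :=
  ∑ p ∈ allPaths N.E N.root (N.leafOf a),
    N.pathProb p * (p.map (fun e => N.len e / ∑ d ∈ N.De e, N.Pdesc e.2 d)).sum

end PhyloNetwork

/-- The original Shapley Value of a set function `f` (with `f ∅ = 0`). -/
noncomputable def shapley {X : Type*} [Fintype X] [DecidableEq X]
    (f : Finset X → ℝ) (a : X) : ℝ :=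
  (1 / (Nat.factorial (Fintype.card X) : ℝ)) *
    ∑ S ∈ Finset.univ.powerset.filter (fun S : Finset X => a ∈ S),
      ((S.card - 1).factorial : ℝ) * ((Fintype.card X - S.card).factorial : ℝ) *
        (f S - f (S.erase a))

section Paths
variable {V : Type*} [DecidableEq V] {E : Finset (V × V)}

@[simp] lemma isPath_nil {u v : V} : IsPath E u v [] ↔ u = v := Iff.rfl

@[simp] lemma isPath_cons {u v : V} {e : V × V} {p : List (V × V)} :
    IsPath E u v (e :: p) ↔ e ∈ E ∧ e.1 = u ∧ IsPath E e.2 v p := Iff.rfl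

lemma isPath_edges : ∀ {p : List (V × V)} {u v : V}, IsPath E u v p → ∀ e ∈ p, e ∈ E
  | [], _, _, _, _, he => by simp at he
  | f :: q, u, v, h, e, he => by
    rcases List.mem_cons.1 he with rfl | he
    · exact h.1
    · exact isPath_edges h.2.2 e he

lemma mem_listsOf : ∀ {n : ℕ} {p : List (V × V)},
    p ∈ listsOf E n ↔ p.length = n ∧ ∀ e ∈ p, e ∈ E
  | 0, p => by simp [listsOf, List.length_eq_zero_iff]; rintro rfl; simp
  | n + 1, p => by
    simp only [listsOf, Finset.mem_biUnion, Finset.mem_image]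
    constructor
    · rintro ⟨e, he, q, hq, rfl⟩
      have := (mem_listsOf (n := n)).1 hq
      refine ⟨by simp [this.1], fun f hf => ?_⟩
      rcases List.mem_cons.1 hf with rfl | hf
      · exact he
      · exact this.2 f hf
    · rintro ⟨hl, hmem⟩
      match p, hl with
      | e :: q, hl =>
        refine ⟨e, hmem e (by simp), q, (mem_listsOf (n := n)).2 ⟨by simpa using hl, fun f hf => hmem f (by simp [hf])⟩, rfl⟩

lemma isPath_append {p q : List (V × V)} : ∀ {u v : V},
    IsPath E u v (p ++ q) ↔ ∃ w, IsPath E u w p ∧ IsPath E w v q := by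
  induction p with
  | nil => intro u v; simp
  | cons e p ih =>
    intro u v
    simp only [List.cons_append, isPath_cons, ih]
    constructor
    · rintro ⟨h1, h2, w, h3, h4⟩; exact ⟨w, ⟨h1, h2, h3⟩, h4⟩
    · rintro ⟨w, ⟨h1, h2, h3⟩, h4⟩; exact ⟨h1, h2, w, h3, h4⟩

lemma isPath_prefix : ∀ {q : List (V × V)} {w v u : V}, IsPath E w v q →
    u ∈ q.map Prod.snd → ∃ q1, q1 ≠ [] ∧ IsPath E w u q1
  | [], _, _, _, _, hu => by simp at hu
  | e :: q, w, v, u, h, hu => by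
    rcases List.mem_cons.1 hu with hu | hu
    · exact ⟨[e], by simp, by simp [h.1, h.2.1, hu]⟩
    · obtain ⟨q1, hq1, hpath⟩ := isPath_prefix h.2.2 hu
      exact ⟨e :: q1, by simp, ⟨h.1, h.2.1, hpath⟩⟩

lemma sum_getD {α : Type*} (g : α → ℝ) (d : α) : ∀ (l : List α),
    (l.map g).sum = ∑ i ∈ Finset.range l.length, g (l.getD i d)
  | [] => by simp
  | e :: l => by
    rw [List.map_cons, List.sum_cons, sum_getD g d l, List.length_cons,
      Finset.sum_range_succ']
    simp [add_comm]

variable (hac : ∀ (v : V) (p : List (V × V)), p ≠ [] → ¬ IsPath E v v p)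
include hac

lemma isPath_verts_nodup {p : List (V × V)} : ∀ {u v : V}, IsPath E u v p →
    (u :: p.map Prod.snd).Nodup := by
  induction p with
  | nil => intro u v _; simp
  | cons e q ih =>
    intro u v h
    have ih' := ih h.2.2
    simp only [List.map_cons, List.nodup_cons] at ih' ⊢
    refine ⟨?_, ih'⟩
    simp only [List.mem_cons]
    rintro (hu | hu)
    · exact hac u [e] (by simp) (by simp [h.1, h.2.1, hu.symm])
    · obtain ⟨q1, hq1, hpath⟩ := isPath_prefix h.2.2 hu
      exact hac u (e :: q1) (by simp) ⟨h.1, h.2.1, hpath⟩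

lemma mem_allPaths [Fintype V] {u v : V} {p : List (V × V)} :
    p ∈ allPaths E u v ↔ IsPath E u v p := by
  constructor
  · exact fun h => (Finset.mem_filter.1 h).2
  · intro h
    refine Finset.mem_filter.2 ⟨Finset.mem_biUnion.2 ⟨p.length, ?_, mem_listsOf.2 ⟨rfl, isPath_edges h⟩⟩, h⟩
    have := (isPath_verts_nodup hac h).length_le_card
    simp only [List.length_cons, List.length_map] at this
    simp only [Finset.mem_range]
    omega



lemma sum_snoc [Fintype V] {u v : V} (hv : v ≠ u) (f : List (V × V) → ℝ) :
    ∑ p ∈ allPaths E u v, f p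
      = ∑ e ∈ E.filter (fun e => e.2 = v), ∑ q ∈ allPaths E u e.1, f (q ++ [e]) := by
  rw [Finset.sum_sigma']
  refine Finset.sum_bij' (fun p hp => (⟨p.getD (p.length - 1) (u, u), p.dropLast⟩ :
      Σ _ : V × V, List (V × V))) (fun x _ => x.2 ++ [x.1]) ?_ ?_ ?_ ?_ ?_
  · intro p hp
    have hpath := (mem_allPaths hac).1 hp
    rcases List.eq_nil_or_concat p with rfl | ⟨q, e, rfl⟩
    · exact absurd hpath.symm hv
    simp only [List.concat_eq_append] at hpath hp ⊢
    obtain ⟨w', h1, h2⟩ := isPath_append.1 hpath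
    obtain ⟨heE, he1, he2⟩ := h2
    simp only [List.dropLast_concat, List.length_append, List.length_cons,
      List.length_nil, Nat.add_sub_cancel]
    have hget : (q ++ [e]).getD q.length (u, u) = e := by
      rw [List.getD_eq_getElem _ _ (by simp), List.getElem_concat_length]
      rfl
    rw [hget]
    refine Finset.mem_sigma.2 ⟨Finset.mem_filter.2 ⟨heE, he2⟩, (mem_allPaths hac).2 ?_⟩
    rwa [he1]
  · rintro ⟨e, q⟩ hx
    simp only [Finset.mem_sigma, Finset.mem_filter] at hx
    refine (mem_allPaths hac).2 (isPath_append.2 ⟨e.1, (mem_allPaths hac).1 hx.2, ?_⟩)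
    exact ⟨hx.1.1, rfl, hx.1.2⟩
  · intro p hp
    have hpath := (mem_allPaths hac).1 hp
    rcases List.eq_nil_or_concat p with rfl | ⟨q, e, rfl⟩
    · exact absurd hpath.symm hv
    simp only [List.concat_eq_append] at hpath hp ⊢
    simp only [List.dropLast_concat, List.length_append, List.length_cons,
      List.length_nil, Nat.add_sub_cancel]
    rw [List.getD_eq_getElem _ _ (by simp), List.getElem_concat_length]
    rfl
  · rintro ⟨e, q⟩ hx
    refine Sigma.ext ?_ ?_ <;>
      simp [List.getD_eq_getElem _ _ (by simp : q.length < (q ++ [e]).length),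
        List.getElem_concat_length]
  · intro p hp
    have hpath := (mem_allPaths hac).1 hp
    rcases List.eq_nil_or_concat p with rfl | ⟨q, e, rfl⟩
    · exact absurd hpath.symm hv
    simp only [List.concat_eq_append] at hpath hp ⊢
    congr 1
    simp only [List.dropLast_concat, List.length_append, List.length_cons,
      List.length_nil, Nat.add_sub_cancel]
    rw [List.getD_eq_getElem _ _ (by simp), List.getElem_concat_length]
    rfl

lemma isPath_split [Fintype V] {u w : V} {p : List (V × V)} (h : IsPath E u w p)
    {k : ℕ} (hk : k < p.length) :
    p[k] ∈ E ∧ IsPath E u p[k].1 (p.take k) ∧ IsPath E p[k].2 w (p.drop (k + 1)) := by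
  have hsplit : p = p.take k ++ p[k] :: p.drop (k + 1) := by
    rw [← List.drop_eq_getElem_cons hk, List.take_append_drop]
  rw [hsplit] at h
  obtain ⟨w', h1, h2, h3, h4⟩ := isPath_append.1 h
  exact ⟨h2, h3 ▸ h1, h4⟩

lemma sum_through [Fintype V] (u w : V) (pr g : V × V → ℝ) :
    ∑ p ∈ allPaths E u w, (p.map pr).prod * (p.map g).sum
      = ∑ e ∈ E, (∑ q ∈ allPaths E u e.1, (q.map pr).prod) * pr e * g e *
          (∑ r ∈ allPaths E e.2 w, (r.map pr).prod) := by
  have hR : ∀ e ∈ E, (∑ q ∈ allPaths E u e.1, (q.map pr).prod) * pr e * g e *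
          (∑ r ∈ allPaths E e.2 w, (r.map pr).prod)
        = ∑ x ∈ (allPaths E u e.1) ×ˢ (allPaths E e.2 w),
            (x.1.map pr).prod * pr e * g e * (x.2.map pr).prod := by
    intro e _
    rw [Finset.sum_product]
    rw [Finset.sum_mul, Finset.sum_mul, Finset.sum_mul]
    exact Finset.sum_congr rfl fun q _ => by rw [Finset.mul_sum]
  rw [Finset.sum_congr rfl hR, Finset.sum_sigma']
  have hL : ∀ p ∈ allPaths E u w, (p.map pr).prod * (p.map g).sum
      = ∑ k ∈ Finset.range p.length, (p.map pr).prod * g (p.getD k (u, u)) := by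
    intro p _
    rw [sum_getD g (u, u) p, Finset.mul_sum]
  rw [Finset.sum_congr rfl hL, Finset.sum_sigma']
  refine Finset.sum_bij' (fun x hx => (⟨x.1.getD x.2 (u, u), (x.1.take x.2, x.1.drop (x.2 + 1))⟩ :
      Σ _ : V × V, List (V × V) × List (V × V)))
    (fun y hy => (⟨y.2.1 ++ y.1 :: y.2.2, y.2.1.length⟩ : Σ _ : List (V × V), ℕ))
    ?_ ?_ ?_ ?_ ?_
  · rintro ⟨p, k⟩ hx
    simp only [Finset.mem_sigma, Finset.mem_range] at hx
    obtain ⟨hp, hk⟩ := hx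
    have h := isPath_split hac ((mem_allPaths hac).1 hp) hk
    dsimp only
    rw [List.getD_eq_getElem _ _ hk]
    exact Finset.mem_sigma.2 ⟨h.1, Finset.mem_product.2
      ⟨(mem_allPaths hac).2 h.2.1, (mem_allPaths hac).2 h.2.2⟩⟩
  · rintro ⟨e, q, r⟩ hy
    simp only [Finset.mem_sigma, Finset.mem_product] at hy
    obtain ⟨he, hq, hr⟩ := hy
    refine Finset.mem_sigma.2 ⟨(mem_allPaths hac).2 (isPath_append.2
      ⟨e.1, (mem_allPaths hac).1 hq, he, rfl, (mem_allPaths hac).1 hr⟩), ?_⟩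
    simp
  · rintro ⟨p, k⟩ hx
    simp only [Finset.mem_sigma, Finset.mem_range] at hx
    obtain ⟨hp, hk⟩ := hx
    have hsplit : p.take k ++ p[k] :: p.drop (k + 1) = p := by
      rw [← List.drop_eq_getElem_cons hk, List.take_append_drop]
    have hget : p.getD k (u, u) = p[k] := List.getD_eq_getElem _ _ hk
    refine Sigma.ext ?_ (heq_of_eq ?_)
    · dsimp only
      rw [hget, hsplit]
    · dsimp only
      simp [List.length_take, Nat.min_eq_left hk.le]
  · rintro ⟨e, q, r⟩ hy
    dsimp only
    have h1 : (q ++ e :: r).getD q.length (u, u) = e := by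
      rw [List.getD_eq_getElem _ _ (by simp), List.getElem_append_right (le_refl q.length)]
      simp
    have h2 : (q ++ e :: r).take q.length = q := List.take_left (l₁ := q) (l₂ := e :: r)
    have h3 : (q ++ e :: r).drop (q.length + 1) = r := by
      simpa using List.drop_left (l₁ := q ++ [e]) (l₂ := r)
    refine Sigma.ext (by dsimp only; rw [h1]) (heq_of_eq ?_)
    dsimp only
    rw [h2, h3]
  · rintro ⟨p, k⟩ hx
    simp only [Finset.mem_sigma, Finset.mem_range] at hx
    obtain ⟨hp, hk⟩ := hx
    have hsplit : p = p.take k ++ p[k] :: p.drop (k + 1) := by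
      rw [← List.drop_eq_getElem_cons hk, List.take_append_drop]
    dsimp only
    rw [List.getD_eq_getElem _ _ hk]
    have hm : List.map pr p = List.map pr (p.take k ++ p[k] :: p.drop (k + 1)) :=
      congrArg (List.map pr) hsplit
    rw [hm]
    simp only [List.map_append, List.map_cons, List.prod_append, List.prod_cons]
    ring
end Paths

section NetLemmas

variable {V X : Type*} [Fintype V] [DecidableEq V] [Fintype X] [DecidableEq X]
variable (N : PhyloNetwork V X)

namespace PhyloNetwork

/-- Every non-root vertex has indegree 1 or 2. -/
lemma indeg_one_or_two {v : V} (hv : v ≠ N.root) : inDeg N.E v = 1 ∨ inDeg N.E v = 2 := by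
  by_cases ho : outDeg N.E v = 0
  · obtain ⟨x, rfl⟩ := (N.leaf_iff v).1 ho
    exact Or.inl (N.leaf_in x)
  · rcases N.internal v hv ho with h | h
    · exact Or.inl h.1
    · exact Or.inr h.1

lemma inflow_one {v : V} (hv : v ≠ N.root) :
    ∑ e ∈ N.E.filter (fun e => e.2 = v), N.prob e = 1 := by
  rcases N.indeg_one_or_two hv with h | h
  · obtain ⟨e, he⟩ := Finset.card_eq_one.1 h
    rw [he, Finset.sum_singleton]
    have heE : e ∈ N.E ∧ e.2 = v := by
      have : e ∈ N.E.filter (fun e => e.2 = v) := he ▸ Finset.mem_singleton_self e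
      simpa using this
    exact N.prob_tree e heE.1 (by rw [heE.2]; omega)
  · exact N.prob_sum v h

/-- Every vertex has a directed path to some leaf. -/
lemma exists_leaf_path (v : V) : ∃ (x : X) (p : List (V × V)), IsPath N.E v (N.leafOf x) p := by
  let r : V → V → Prop := fun a b => ∃ p, p ≠ [] ∧ IsPath N.E b a p
  have : IsTrans V r := ⟨by
    rintro a b c ⟨p, hp, hpath⟩ ⟨q, hq, hqath⟩
    exact ⟨q ++ p, by simp [hq], isPath_append.2 ⟨b, hqath, hpath⟩⟩⟩
  have : IsIrrefl V r := ⟨by rintro a ⟨p, hp, hpath⟩; exact N.acyclic a p hp hpath⟩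
  have hwf : WellFounded r := Finite.wellFounded_of_trans_of_irrefl r
  induction v using hwf.induction with
  | _ v ih =>
    by_cases ho : outDeg N.E v = 0
    · obtain ⟨x, hx⟩ := (N.leaf_iff v).1 ho
      exact ⟨x, [], hx.symm⟩
    · have : (N.E.filter fun e => e.1 = v).Nonempty :=
        Finset.card_pos.1 (Nat.pos_of_ne_zero ho)
      obtain ⟨e, he⟩ := this
      rw [Finset.mem_filter] at he
      obtain ⟨x, p, hp⟩ := ih e.2 ⟨[e], by simp, by simp [he.1, he.2]⟩
      exact ⟨x, e :: p, ⟨he.1, he.2, hp⟩⟩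

lemma pathProb_nonneg {p : List (V × V)} (hp : ∀ e ∈ p, e ∈ N.E) : 0 ≤ N.pathProb p := by
  refine List.prod_nonneg ?_
  intro a ha
  obtain ⟨e, he, rfl⟩ := List.mem_map.1 ha
  exact (N.prob_pos e (hp e he)).le

lemma pathProb_pos {p : List (V × V)} (hp : ∀ e ∈ p, e ∈ N.E) : 0 < N.pathProb p := by
  refine List.prod_pos ?_
  intro a ha
  obtain ⟨e, he, rfl⟩ := List.mem_map.1 ha
  exact N.prob_pos e (hp e he)

/-- total downstream probability mass -/
noncomputable def Tval (v : V) : ℝ := ∑ d : X, N.Pdesc v d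

lemma Tval_pos (v : V) : 0 < N.Tval v := by
  obtain ⟨x, p, hp⟩ := N.exists_leaf_path v
  have hx : 0 < N.Pdesc v x := by
    refine Finset.sum_pos' (fun q hq => N.pathProb_nonneg
      (isPath_edges ((mem_allPaths N.acyclic).1 hq))) ?_
    exact ⟨p, (mem_allPaths N.acyclic).2 hp, N.pathProb_pos (isPath_edges hp)⟩
  refine Finset.sum_pos' (fun d _ => ?_) ⟨x, Finset.mem_univ x, hx⟩
  exact Finset.sum_nonneg fun q hq => N.pathProb_nonneg
    (isPath_edges ((mem_allPaths N.acyclic).1 hq))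

lemma De_sum (e : V × V) : ∑ d ∈ N.De e, N.Pdesc e.2 d = N.Tval e.2 := by
  refine Finset.sum_subset (Finset.subset_univ _) fun d _ hd => ?_
  have : allPaths N.E e.2 (N.leafOf d) = ∅ := by
    refine Finset.eq_empty_of_forall_notMem fun p hp => hd ?_
    exact Finset.mem_filter.2 ⟨Finset.mem_univ d, ⟨p, (mem_allPaths N.acyclic).1 hp⟩⟩
  rw [Pdesc, this, Finset.sum_empty]

/-- total root-to-`v` probability mass equals one -/
lemma Sval_eq_one (v : V) : ∑ p ∈ allPaths N.E N.root v, N.pathProb p = 1 := by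
  let r : V → V → Prop := fun a b => ∃ p, p ≠ [] ∧ IsPath N.E a b p
  have : IsTrans V r := ⟨by
    rintro a b c ⟨p, hp, hpath⟩ ⟨q, hq, hqath⟩
    exact ⟨p ++ q, by simp [hp], isPath_append.2 ⟨b, hpath, hqath⟩⟩⟩
  have : IsIrrefl V r := ⟨by rintro a ⟨p, hp, hpath⟩; exact N.acyclic a p hp hpath⟩
  have hwf : WellFounded r := Finite.wellFounded_of_trans_of_irrefl r
  induction v using hwf.induction with
  | _ v ih =>
    by_cases hv : v = N.root
    · subst hv
      have : allPaths N.E N.root N.root = {[]} := by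
        ext p
        simp only [Finset.mem_singleton]
        constructor
        · intro hp
          by_contra hne
          exact N.acyclic N.root p hne ((mem_allPaths N.acyclic).1 hp)
        · rintro rfl
          exact (mem_allPaths N.acyclic).2 rfl
      rw [this, Finset.sum_singleton]
      simp [pathProb]
    · rw [sum_snoc N.acyclic hv]
      have : ∀ e ∈ N.E.filter (fun e => e.2 = v),
          ∑ q ∈ allPaths N.E N.root e.1, N.pathProb (q ++ [e]) = N.prob e := by
        intro e he
        rw [Finset.mem_filter] at he
        have hrec : ∑ q ∈ allPaths N.E N.root e.1, N.pathProb q = 1 :=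
          ih e.1 ⟨[e], by simp, by simp [he.1, he.2]⟩
        calc ∑ q ∈ allPaths N.E N.root e.1, N.pathProb (q ++ [e])
            = ∑ q ∈ allPaths N.E N.root e.1, N.pathProb q * N.prob e := by
              refine Finset.sum_congr rfl fun q _ => ?_
              simp [pathProb]
          _ = N.prob e := by rw [← Finset.sum_mul, hrec, one_mul]
      rw [Finset.sum_congr rfl this]
      exact N.inflow_one hv

theorem NFP_efficient' : ∑ a : X, N.NFP a = ∑ e ∈ N.E, N.len e := by
  have hc : ∀ a : X, N.NFP a = ∑ p ∈ allPaths N.E N.root (N.leafOf a),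
      (p.map N.prob).prod * (p.map (fun e => N.len e / N.Tval e.2)).sum := by
    intro a
    simp only [NFP, pathProb, N.De_sum]
  calc ∑ a : X, N.NFP a
      = ∑ a : X, ∑ e ∈ N.E, (∑ q ∈ allPaths N.E N.root e.1, (q.map N.prob).prod)
          * N.prob e * (N.len e / N.Tval e.2)
          * (∑ r ∈ allPaths N.E e.2 (N.leafOf a), (r.map N.prob).prod) := by
        refine Finset.sum_congr rfl fun a _ => ?_
        rw [hc a]
        exact sum_through N.acyclic N.root (N.leafOf a) N.prob (fun e => N.len e / N.Tval e.2)
    _ = ∑ e ∈ N.E, (∑ q ∈ allPaths N.E N.root e.1, (q.map N.prob).prod)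
          * N.prob e * (N.len e / N.Tval e.2) * N.Tval e.2 := by
        rw [Finset.sum_comm]
        refine Finset.sum_congr rfl fun e _ => ?_
        rw [← Finset.mul_sum]
        rfl
    _ = ∑ e ∈ N.E, N.prob e * N.len e := by
        refine Finset.sum_congr rfl fun e he => ?_
        have hS : ∑ q ∈ allPaths N.E N.root e.1, (List.map N.prob q).prod = 1 :=
          N.Sval_eq_one e.1
        rw [hS, one_mul, mul_assoc, div_mul_cancel₀ _ (N.Tval_pos e.2).ne']
    _ = ∑ e ∈ N.E, N.len e := by
        refine Finset.sum_congr rfl fun e he => ?_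
        have hv : e.2 ≠ N.root := by
          intro h
          have : e ∈ N.E.filter (fun f => f.2 = N.root) := Finset.mem_filter.2 ⟨he, h⟩
          have h0 := N.root_in
          rw [inDeg] at h0
          rw [Finset.card_eq_zero.1 h0] at this
          simp at this
        rcases N.indeg_one_or_two hv with h | h
        · rw [N.prob_tree e he (by omega), one_mul]
        · rw [N.len_retic e he h, mul_zero]

end PhyloNetwork

end NetLemmas


/-- the Net Fair Proportion Index is efficient: the indices of all taxa
sum to the total edge length of the network. -/
theorem NFP_efficient {V X : Type*} [Fintype V] [DecidableEq V] [Fintype X] [DecidableEq X] (N : PhyloNetwork V X) :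
    ∑ a : X, N.NFP a = ∑ e ∈ N.E, N.len e :=
  N.NFP_efficient'
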